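/- For every i ∈ Z_N and every v ∈ B_N = F_2^N, the coordinate functions of the Boolean average satisfy Bav_N^i(Btr(v)) = Bav_N^{⟨i−1⟩_N}(v); hence every coordinate function Bav_N^i is obtained from Bav_N^0 by a cyclic change of variables. -/

import Mathlib

namespace Rhythm

/-- `a +_N b`, addition on `Z_N = {0,…,N−1}`. -/
def addN (N a b : ℕ) : ℕ := (a + b) % N

/-- `a −_N b`, subtraction on `Z_N = {0,…,N−1}`. -/
def subN (N a b : ℕ) : ℕ := (a + N - b) % N

/-- The discrete average `av(a,b) = a +_N ⌊(b −_N a)/2⌋`. -/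
def av (N a b : ℕ) : ℕ := addN N a (subN N b a / 2)

/-- The cyclic interval `[a,b]_{Z_N}`. -/
def cyclicIcc (N a b : ℕ) : Finset ℕ :=
  if a ≤ b then Finset.Icc a b else Finset.Icc a (N - 1) ∪ Finset.Icc 0 b

/-- The half-open cyclic interval `[a,b)_{Z_N} = [a,b]_{Z_N} \ {b}`. -/
def cyclicIco (N a b : ℕ) : Finset ℕ := (cyclicIcc N a b).erase b

/-- The half-open cyclic interval `(a,b]_{Z_N} = [a,b]_{Z_N} \ {a}`. -/
def cyclicIoc (N a b : ℕ) : Finset ℕ := (cyclicIcc N a b).erase a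

/-- Cyclic successor `⟨i+1⟩_n` on `Fin n`. -/
def csucc {n : ℕ} (i : Fin n) : Fin n := ⟨(i.val + 1) % n, Nat.mod_lt _ i.pos⟩

/-- Cyclic predecessor `⟨i−1⟩_n` on `Fin n`. -/
def cpred {n : ℕ} (i : Fin n) : Fin n := ⟨(i.val + (n - 1)) % n, Nat.mod_lt _ i.pos⟩

/-- `a ∈ R_N^n`: entries in `Z_N`, pairwise distinct, and `Σ_i (a_{⟨i+1⟩_n} −_N a_i) = N`. -/
def IsRhythm (N : ℕ) {n : ℕ} (a : Fin n → ℕ) : Prop :=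
  (∀ i, a i < N) ∧ Function.Injective a ∧ (∑ i, subN N (a (csucc i)) (a i)) = N

/-- The discrete average transformation `Rav`. -/
def Rav (N : ℕ) {n : ℕ} (a : Fin n → ℕ) : Fin n → ℕ := fun i => av N (a i) (a (csucc i))

/-- The rotation `rot(a_0,…,a_{n−1}) = (a_{n−1},a_0,…,a_{n−2})`. -/
def rot {n : ℕ} (a : Fin n → ℕ) : Fin n → ℕ := fun i => a (cpred i)

/-- The translation `tr(a_0,…,a_{n−1}) = (a_0 +_N 1,…,a_{n−1} +_N 1)`. -/
def tr (N : ℕ) {n : ℕ} (a : Fin n → ℕ) : Fin n → ℕ := fun i => addN N (a i) 1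

/-- `j` is the jumping number of `a`: `a_{⟨j−1⟩_n} > a_j` and `a_{⟨k−1⟩_n} < a_k` for `k ≠ j`. -/
def IsJump {n : ℕ} (a : Fin n → ℕ) (j : Fin n) : Prop :=
  a (cpred j) > a j ∧ ∀ k, k ≠ j → a (cpred k) < a k

/-- The map `Iav`: for `n ≥ 2` it is `Rav` if `a` is proper (`N − a_{n−1} > a_0`) and
`rot ∘ Rav` otherwise; for `n ≤ 1` it is the identity. -/
def Iav (N : ℕ) {n : ℕ} (a : Fin n → ℕ) : Fin n → ℕ :=
  if h : 2 ≤ n then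
    if N - a ⟨n - 1, by omega⟩ > a ⟨0, by omega⟩ then Rav N a else rot (Rav N a)
  else a

/-- The support of a Boolean vector `v ∈ F_2^N`. -/
def supp (N : ℕ) (v : Fin N → ZMod 2) : Finset (Fin N) :=
  Finset.univ.filter fun i => v i = 1

/-- `BtoI(v)`: the increasing enumeration of the support of `v`. -/
def BtoI (N : ℕ) (v : Fin N → ZMod 2) : Fin (supp N v).card → ℕ :=
  fun i => (((supp N v).orderIsoOfFin rfl) i).1.val

/-- `ItoB(b)`: the characteristic vector of the set of entries of the tuple `b`. -/
def ItoB (N : ℕ) {n : ℕ} (b : Fin n → ℕ) : Fin N → ZMod 2 :=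
  fun i => if ∃ k, b k = i.val then 1 else 0

/-- The Boolean average `Bav = ItoB ∘ Iav ∘ BtoI : B_N → B_N`. -/
def Bav (N : ℕ) (v : Fin N → ZMod 2) : Fin N → ZMod 2 :=
  ItoB N (Iav N (BtoI N v))

/-- The cyclic shift `Btr(v_0,…,v_{N−1}) = (v_{N−1},v_0,…,v_{N−2})`. -/
def Btr (N : ℕ) (v : Fin N → ZMod 2) : Fin N → ZMod 2 := fun i => v (cpred i)

/-- `Par_N`: the set of parental pairs of zero, i.e. pairs `(a,b) ∈ Z_N × Z_N` with `av(a,b) = 0`. -/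
def Par (N : ℕ) : Finset (ℕ × ℕ) :=
  (Finset.range N ×ˢ Finset.range N).filter fun p => av N p.1 p.2 = 0

/-- The least absolute remainder `φ_N(i) ∈ Z_{N,±}` of `i ∈ Z_N`. -/
def toSigned (N : ℕ) (i : Fin N) : ℤ :=
  if (i : ℕ) ≤ N / 2 then (i : ℤ) else (i : ℤ) - N

/-- `G_N(y) = Bav_N^0(v)` where `v_{⟨j⟩_N} = 1 + y_j` for `j ∈ Z_{N,±}`. -/
def G (N : ℕ) (y : ℤ → ZMod 2) : ZMod 2 :=
  if h : 0 < N then Bav N (fun i => 1 + y (toSigned N i)) ⟨0, h⟩ else 0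

-- ### auxiliary lemmas

lemma mod_two_cases {N m : ℕ} (hN : 0 < N) (h : m < 2 * N) :
    m % N = if m < N then m else m - N := by
  split_ifs with h1
  · exact Nat.mod_eq_of_lt h1
  · rw [Nat.mod_eq_sub_mod (by omega), Nat.mod_eq_of_lt (by omega)]

lemma cpred_csucc {n : ℕ} (i : Fin n) : cpred (csucc i) = i := by
  have hn := i.pos
  ext
  simp only [cpred, csucc, Nat.mod_add_mod]
  have : i.val + 1 + (n - 1) = i.val + n := by omega
  rw [this, Nat.add_mod_right, Nat.mod_eq_of_lt i.isLt]

lemma csucc_cpred {n : ℕ} (i : Fin n) : csucc (cpred i) = i := by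
  have hn := i.pos
  ext
  simp only [cpred, csucc, Nat.mod_add_mod]
  have : i.val + (n - 1) + 1 = i.val + n := by omega
  rw [this, Nat.add_mod_right, Nat.mod_eq_of_lt i.isLt]

lemma av_lt {N a b : ℕ} (hN : 0 < N) : av N a b < N := Nat.mod_lt _ hN

lemma av_eq {N a b : ℕ} (ha : a < N) (hb : b < N) :
    av N a b = if a ≤ b then a + (b - a) / 2
      else if a + (b + N - a) / 2 < N then a + (b + N - a) / 2
        else a + (b + N - a) / 2 - N := by
  have hN : 0 < N := by omega
  unfold av addN subN
  split_ifs with h1 h2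
  · have e1 : (b + N - a) % N = if b + N - a < N then b + N - a else b + N - a - N :=
      mod_two_cases hN (by omega)
    have e2 : b + N - a - N = b - a := by omega
    rw [e1]
    split_ifs with h3
    · exact absurd h3 (by omega)
    · rw [e2]; exact Nat.mod_eq_of_lt (by omega)
  all_goals {
    have e1 : (b + N - a) % N = b + N - a := Nat.mod_eq_of_lt (by omega)
    rw [e1, mod_two_cases hN (by omega)]
    split_ifs <;> omega }

lemma av_succ {N a b : ℕ} (hN : 0 < N) (ha : a < N) (hb : b < N) :
    av N ((a + 1) % N) ((b + 1) % N) = (av N a b + 1) % N := by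
  have hR : (av N a b + 1) % N =
      if av N a b + 1 < N then av N a b + 1 else av N a b + 1 - N :=
    mod_two_cases hN (by have := av_lt (a := a) (b := b) hN; omega)
  rcases Nat.lt_or_ge (a + 1) N with hA | hA <;>
    rcases Nat.lt_or_ge (b + 1) N with hB | hB
  · rw [Nat.mod_eq_of_lt hA, Nat.mod_eq_of_lt hB, av_eq hA hB, av_eq ha hb] at *
    rw [hR]
    split_ifs <;> omega
  · have hb1 : b + 1 = N := by omega
    have e : (b + 1) % N = 0 := by rw [hb1, Nat.mod_self]
    rw [Nat.mod_eq_of_lt hA, e, av_eq hA hN, av_eq ha hb] at *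
    rw [hR]
    split_ifs <;> omega
  · have ha1 : a + 1 = N := by omega
    have e : (a + 1) % N = 0 := by rw [ha1, Nat.mod_self]
    rw [e, Nat.mod_eq_of_lt hB, av_eq hN hB, av_eq ha hb] at *
    rw [hR]
    split_ifs <;> omega
  · have ha1 : a + 1 = N := by omega
    have hb1 : b + 1 = N := by omega
    have e1 : (a + 1) % N = 0 := by rw [ha1, Nat.mod_self]
    have e2 : (b + 1) % N = 0 := by rw [hb1, Nat.mod_self]
    rw [e1, e2, av_eq hN hN, av_eq ha hb] at *
    rw [hR]
    split_ifs <;> omega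


lemma Rav_tr (N : ℕ) {n : ℕ} (hN : 0 < N) (a : Fin n → ℕ) (ha : ∀ k, a k < N) :
    Rav N (tr N a) = tr N (Rav N a) := by
  funext i
  show av N ((a i + 1) % N) ((a (csucc i) + 1) % N) = (av N (a i) (a (csucc i)) + 1) % N
  exact av_succ hN (ha i) (ha (csucc i))

lemma Rav_rot (N : ℕ) {n : ℕ} (a : Fin n → ℕ) :
    Rav N (rot a) = rot (Rav N a) := by
  funext i
  show av N (a (cpred i)) (a (cpred (csucc i))) = av N (a (cpred i)) (a (csucc (cpred i)))
  rw [cpred_csucc, csucc_cpred]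

lemma exists_rot_iff {n : ℕ} (a : Fin n → ℕ) (j : ℕ) :
    (∃ k, rot a k = j) ↔ ∃ k, a k = j := by
  constructor
  · rintro ⟨k, hk⟩; exact ⟨cpred k, hk⟩
  · rintro ⟨k, hk⟩; exact ⟨csucc k, by rwa [rot, cpred_csucc]⟩

lemma exists_Iav_iff (N : ℕ) {n : ℕ} (a : Fin n → ℕ) (j : ℕ) :
    (∃ k, Iav N a k = j) ↔ if 2 ≤ n then (∃ k, Rav N a k = j) else ∃ k, a k = j := by
  unfold Iav
  split_ifs with h h2
  · exact Iff.rfl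
  · exact exists_rot_iff _ _
  · exact Iff.rfl

lemma exists_tr_iff {N : ℕ} (hN : 0 < N) {n : ℕ} (a : Fin n → ℕ) (ha : ∀ k, a k < N)
    (i : Fin N) : (∃ k, tr N a k = i.val) ↔ ∃ k, a k = (cpred i).val := by
  have hcp : (cpred i).val = (i.val + (N - 1)) % N := rfl
  have key : ∀ x, x < N → (((x + 1) % N = i.val) ↔ x = (i.val + (N - 1)) % N) := by
    intro x hx
    rw [mod_two_cases hN (by omega), mod_two_cases hN (by omega)]
    have := i.isLt
    split_ifs <;> omega
  constructor
  · rintro ⟨k, hk⟩; exact ⟨k, by rw [hcp, ← (key _ (ha k))]; exact hk⟩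
  · rintro ⟨k, hk⟩; exact ⟨k, by rw [show tr N a k = (a k + 1) % N from rfl, key _ (ha k), ← hcp]; exact hk⟩

lemma Iav_comp_cast (N : ℕ) {m n : ℕ} (e : m = n) (a : Fin n → ℕ) :
    Iav N (fun k => a (Fin.cast e k)) = fun k => Iav N a (Fin.cast e k) := by
  subst e; rfl

lemma exists_comp_cast {m n : ℕ} (e : m = n) (P : Fin n → Prop) :
    (∃ k : Fin m, P (Fin.cast e k)) ↔ ∃ k, P k := by
  subst e; exact Iff.rfl

lemma BtoI_eq (N : ℕ) (v : Fin N → ZMod 2) (k : Fin (supp N v).card) :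
    BtoI N v k = ((supp N v).orderEmbOfFin rfl k : Fin N).val := by
  rw [BtoI, Finset.coe_orderIsoOfFin_apply]

lemma BtoI_lt (N : ℕ) (v : Fin N → ZMod 2) (k : Fin (supp N v).card) :
    BtoI N v k < N := (((supp N v).orderIsoOfFin rfl) k).1.isLt

lemma supp_Btr (N : ℕ) (v : Fin N → ZMod 2) :
    supp N (Btr N v) = (supp N v).image csucc := by
  ext i
  simp only [supp, Finset.mem_filter, Finset.mem_image, Finset.mem_univ, true_and]
  simp only [Btr]
  constructor
  · intro h; exact ⟨cpred i, h, csucc_cpred i⟩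
  · rintro ⟨j, hj, rfl⟩; rwa [cpred_csucc]

lemma card_supp_Btr (N : ℕ) (v : Fin N → ZMod 2) :
    (supp N (Btr N v)).card = (supp N v).card := by
  rw [supp_Btr]
  exact Finset.card_image_of_injective _ fun x y h => by
    have := congrArg cpred h; rwa [cpred_csucc, cpred_csucc] at this


lemma cpred_val {n : ℕ} (k : Fin n) :
    (cpred k).val = if k.val = 0 then n - 1 else k.val - 1 := by
  have h1 := k.isLt
  have h2 := k.pos
  simp only [cpred]
  split_ifs with h
  · rw [h, Nat.zero_add, Nat.mod_eq_of_lt (by omega)]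
  · have e : k.val + (n - 1) = (k.val - 1) + n := by omega
    rw [e, Nat.add_mod_right, Nat.mod_eq_of_lt (by omega)]

lemma BtoI_strictMono (N : ℕ) (v : Fin N → ZMod 2) : StrictMono (BtoI N v) := by
  intro j k h
  rw [BtoI_eq, BtoI_eq]
  exact ((supp N v).orderEmbOfFin rfl).strictMono h

lemma BtoI_Btr (N : ℕ) (hN : 3 ≤ N) (v : Fin N → ZMod 2) :
    (∀ k, BtoI N (Btr N v) k = tr N (BtoI N v) (Fin.cast (card_supp_Btr N v) k)) ∨
    (∀ k, BtoI N (Btr N v) k = rot (tr N (BtoI N v)) (Fin.cast (card_supp_Btr N v) k)) := by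
  have hN0 : 0 < N := by omega
  set f := (supp N v).orderEmbOfFin rfl with hf
  have e := card_supp_Btr N v
  by_cases hA : (⟨N - 1, by omega⟩ : Fin N) ∈ supp N v
  · -- wrap-around case: rot ∘ tr
    right
    have hn0 : 0 < (supp N v).card := Finset.card_pos.2 ⟨_, hA⟩
    -- the last element of the enumeration is N-1
    have hmax : (f ⟨(supp N v).card - 1, by omega⟩).val = N - 1 := by
      obtain ⟨j, hj⟩ : ∃ j, f j = (⟨N - 1, by omega⟩ : Fin N) := by
        have := (supp N v).range_orderEmbOfFin rfl
        rw [← hf] at this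
        have : (⟨N - 1, by omega⟩ : Fin N) ∈ Set.range f := by rw [this]; exact hA
        exact this
      have h1 : f j ≤ f ⟨(supp N v).card - 1, by omega⟩ :=
        f.monotone (Fin.le_def.2 (show j.val ≤ (supp N v).card - 1 by have := j.isLt; omega))
      have h2 : (f ⟨(supp N v).card - 1, by omega⟩).val ≤ N - 1 := by
        have := (f ⟨(supp N v).card - 1, by omega⟩).isLt; omega
      have h5 : (f j).val = N - 1 := by rw [hj]
      have h4 := Fin.le_def.1 h1
      omega
    have hlt : ∀ j : Fin (supp N v).card, j.val < (supp N v).card - 1 → (f j).val < N - 1 := by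
      intro j hj
      have := f.strictMono (show j < ⟨(supp N v).card - 1, by omega⟩ from Fin.lt_def.2 (by simpa using hj))
      have := Fin.lt_def.1 this
      omega
    set g : Fin (supp N (Btr N v)).card → Fin N :=
      fun k => csucc (f (cpred (Fin.cast e k))) with hg
    have hgmem : ∀ k, g k ∈ supp N (Btr N v) := by
      intro k
      rw [supp_Btr, Finset.mem_image]
      exact ⟨f (cpred (Fin.cast e k)), (supp N v).orderEmbOfFin_mem rfl _, rfl⟩
    have hgval : ∀ k : Fin (supp N (Btr N v)).card,
        (g k).val = if k.val = 0 then 0 else (f ⟨k.val - 1, by omega⟩).val + 1 := by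
      intro k
      have hcp : (cpred (Fin.cast e k)).val = if k.val = 0 then (supp N v).card - 1 else k.val - 1 := by
        rw [cpred_val]; rfl
      show ((f (cpred (Fin.cast e k))).val + 1) % N = _
      split_ifs with h
      · rw [show cpred (Fin.cast e k) = ⟨(supp N v).card - 1, by omega⟩ from Fin.ext (by rw [hcp]; simp [h])]
        rw [hmax]
        have : N - 1 + 1 = N := by omega
        rw [this, Nat.mod_self]
      · rw [show cpred (Fin.cast e k) = ⟨k.val - 1, by omega⟩ from Fin.ext (by rw [hcp]; simp [h])]
        have hb : (f ⟨k.val - 1, by omega⟩).val < N - 1 := by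
          apply hlt
          have := k.isLt
          simp only
          omega
        exact Nat.mod_eq_of_lt (by omega)
    have hgmono : StrictMono g := by
      intro j k hjk
      have hjk' := Fin.lt_def.1 hjk
      rw [Fin.lt_def, hgval, hgval]
      rcases Nat.eq_zero_or_pos j.val with hj0 | hj0
      · rw [if_pos hj0, if_neg (by omega)]
        omega
      · rw [if_neg (by omega), if_neg (by omega)]
        have := f.strictMono (show (⟨j.val - 1, by omega⟩ : Fin (supp N v).card) < ⟨k.val - 1, by omega⟩ from
          Fin.lt_def.2 (by simp; omega))
        have := Fin.lt_def.1 this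
        omega
    have huniq : g = ⇑((supp N (Btr N v)).orderEmbOfFin rfl) :=
      Finset.orderEmbOfFin_unique rfl hgmem hgmono
    intro k
    rw [BtoI_eq, ← huniq]
    show (g k).val = (BtoI N v (cpred (Fin.cast e k)) + 1) % N
    rw [hg]
    show ((f (cpred (Fin.cast e k))).val + 1) % N = (BtoI N v (cpred (Fin.cast e k)) + 1) % N
    rw [BtoI_eq]
  · -- no wrap: plain tr
    left
    have hlt : ∀ j : Fin (supp N v).card, (f j).val < N - 1 := by
      intro j
      have hmem := (supp N v).orderEmbOfFin_mem rfl j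
      have hlt' := (f j).isLt
      rcases Nat.lt_or_ge (f j).val (N - 1) with h | h
      · exact h
      · exfalso
        apply hA
        have : f j = (⟨N - 1, by omega⟩ : Fin N) := Fin.ext (show (f j).val = N - 1 by omega)
        rwa [← this]
    set g : Fin (supp N (Btr N v)).card → Fin N := fun k => csucc (f (Fin.cast e k)) with hg
    have hgmem : ∀ k, g k ∈ supp N (Btr N v) := by
      intro k
      rw [supp_Btr, Finset.mem_image]
      exact ⟨f (Fin.cast e k), (supp N v).orderEmbOfFin_mem rfl _, rfl⟩
    have hgval : ∀ k : Fin (supp N (Btr N v)).card, (g k).val = (f (Fin.cast e k)).val + 1 := by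
      intro k
      show ((f (Fin.cast e k)).val + 1) % N = _
      exact Nat.mod_eq_of_lt (by have := hlt (Fin.cast e k); omega)
    have hgmono : StrictMono g := by
      intro j k hjk
      rw [Fin.lt_def, hgval, hgval]
      have := f.strictMono (show Fin.cast e j < Fin.cast e k from Fin.lt_def.2 (Fin.lt_def.1 hjk))
      have := Fin.lt_def.1 this
      omega
    have huniq : g = ⇑((supp N (Btr N v)).orderEmbOfFin rfl) :=
      Finset.orderEmbOfFin_unique rfl hgmem hgmono
    intro k
    rw [BtoI_eq, ← huniq]
    show (g k).val = (BtoI N v (Fin.cast e k) + 1) % N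
    rw [hg]
    show ((f (Fin.cast e k)).val + 1) % N = (BtoI N v (Fin.cast e k) + 1) % N
    rw [BtoI_eq]

end Rhythm

open Rhythm in
/-- For every `i ∈ Z_N` and every `v ∈ B_N = F_2^N`, the coordinate functions of the Boolean
average satisfy `Bav_N^i(Btr(v)) = Bav_N^{⟨i−1⟩_N}(v)`: every coordinate function is obtained
from `Bav_N^0` by a cyclic change of variables. -/
theorem Bav_coord_Btr (N : ℕ) (hN : 3 ≤ N) (i : Fin N) (v : Fin N → ZMod 2) :
    Bav N (Btr N v) i = Bav N v (cpred i) := by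
  have hN0 : 0 < N := by omega
  have e := card_supp_Btr N v
  have hsv : ∀ k, BtoI N v k < N := BtoI_lt N v
  have key : (∃ k, Iav N (BtoI N (Btr N v)) k = i.val) ↔
      (∃ k, Iav N (BtoI N v) k = (cpred i).val) := by
    rcases BtoI_Btr N hN v with hc | hc
    · have hfun : BtoI N (Btr N v) =
          fun k => tr N (BtoI N v) (Fin.cast (card_supp_Btr N v) k) := funext hc
      rw [hfun, Iav_comp_cast N (card_supp_Btr N v) (tr N (BtoI N v))]
      rw [exists_comp_cast (card_supp_Btr N v) (fun k => Iav N (tr N (BtoI N v)) k = i.val)]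
      rw [exists_Iav_iff, exists_Iav_iff]
      by_cases h2 : 2 ≤ (supp N v).card
      · rw [if_pos h2, if_pos h2, Rav_tr N hN0 _ hsv]
        exact exists_tr_iff hN0 _ (fun k => av_lt hN0) i
      · rw [if_neg h2, if_neg h2]
        exact exists_tr_iff hN0 _ hsv i
    · have hfun : BtoI N (Btr N v) =
          fun k => rot (tr N (BtoI N v)) (Fin.cast (card_supp_Btr N v) k) := funext hc
      rw [hfun, Iav_comp_cast N (card_supp_Btr N v) (rot (tr N (BtoI N v)))]
      rw [exists_comp_cast (card_supp_Btr N v)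
          (fun k => Iav N (rot (tr N (BtoI N v))) k = i.val)]
      rw [exists_Iav_iff, exists_Iav_iff]
      by_cases h2 : 2 ≤ (supp N v).card
      · rw [if_pos h2, if_pos h2, Rav_rot, exists_rot_iff, Rav_tr N hN0 _ hsv]
        exact exists_tr_iff hN0 _ (fun k => av_lt hN0) i
      · rw [if_neg h2, if_neg h2, exists_rot_iff]
        exact exists_tr_iff hN0 _ hsv i
  show ItoB N (Iav N (BtoI N (Btr N v))) i = ItoB N (Iav N (BtoI N v)) (cpred i)
  simp only [ItoB]
  rw [if_congr key rfl rfl]
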